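/- Let H be a Hopf algebra and A an algebra equipped with an adjoint H-action h ▷ a = u(h₍₁₎)·a·u(S(h₍₂₎)) for an algebra homomorphism u : H → A. Then the map A#H → A⊗H sending a#h to a·u(h₍₁₎) ⊗ h₍₂₎ is an isomorphism of algebras, where A⊗H carries the tensor product algebra structure with the two factors commuting. -/

import Mathlib

open TensorProduct LinearMap

noncomputable section

variable (k : Type) [Field k]
variable (H : Type) [Ring H] [HopfAlgebra k H]

/-- `F`, with inverse `Finv`, is a counital 2-cocycle on the Hopf algebra `H`:
`(F⊗1)·(Δ⊗id)(F) = (1⊗F)·(id⊗Δ)(F)` and `(ε⊗id)(F) = 1 = (id⊗ε)(F)`. -/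
def IsCocycle (F Finv : H ⊗[k] H) : Prop :=
  F * Finv = 1 ∧ Finv * F = 1 ∧
  (F ⊗ₜ[k] (1 : H)) * (TensorProduct.map Coalgebra.comul LinearMap.id F) =
    (TensorProduct.assoc k H H H).symm
      (((1 : H) ⊗ₜ[k] F) * (TensorProduct.map LinearMap.id Coalgebra.comul F)) ∧
  TensorProduct.map Coalgebra.counit LinearMap.id F = 1 ∧
  TensorProduct.map LinearMap.id Coalgebra.counit F = 1

/-- A (left) module-algebra structure of a Hopf algebra `H` on an algebra `A`:
`A` is an algebra object in the category of `H`-modules. -/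
structure ModuleAlgebra (A : Type) [Ring A] [Algebra k A] where
  act : H →ₗ[k] Module.End k A
  act_one : act 1 = 1
  act_mul : ∀ g h : H, act (g * h) = act g * act h
  act_algebra_unit : ∀ h : H, act h (1 : A) = (Coalgebra.counit h : k) • (1 : A)
  act_algebra_mul : ∀ (h : H) (a b : A),
    act h (a * b) = LinearMap.mul' k A
      ((TensorProduct.homTensorHomMap (RingHom.id k) A A A A
        (TensorProduct.map act act (Coalgebra.comul h))) (a ⊗ₜ[k] b))

variable {k H}

/-- The operator on `A ⊗ B` obtained by letting an element `x ∈ H ⊗ H` act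
legwise through the actions `actA`, `actB`. -/
def legAct {A B : Type} [AddCommGroup A] [Module k A] [AddCommGroup B] [Module k B]
    (actA : H →ₗ[k] Module.End k A) (actB : H →ₗ[k] Module.End k B) (x : H ⊗[k] H) :
    A ⊗[k] B →ₗ[k] A ⊗[k] B :=
  TensorProduct.homTensorHomMap (RingHom.id k) A B A B (TensorProduct.map actA actB x)

/-- The twisted product `m_F = m ∘ (F⁻¹ ▷ −)` on `A`. -/
def twistedMul {A : Type} [Ring A] [Algebra k A] (ma : ModuleAlgebra k H A)
    (Finv : H ⊗[k] H) : A ⊗[k] A →ₗ[k] A :=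
  LinearMap.mul' k A ∘ₗ legAct ma.act ma.act Finv

/-- The twisted coproduct `Δ_F(h) = F·Δ(h)·F⁻¹`. -/
def twistedComul (F Finv : H ⊗[k] H) : H →ₗ[k] H ⊗[k] H :=
  LinearMap.mulLeft k F ∘ₗ LinearMap.mulRight k Finv ∘ₗ Coalgebra.comul


/-- A representation of a `k`-algebra `A` on a `k`-vector space `V`. -/
structure AlgRep (A : Type) [Ring A] [Algebra k A] (V : Type) [AddCommGroup V] [Module k V] where
  ρ : A →ₗ[k] Module.End k V
  ρ_one : ρ 1 = 1
  ρ_mul : ∀ a b : A, ρ (a * b) = ρ a * ρ b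

/-- `V` is an `(H,A)`-module: the `A`-action is a morphism of `H`-modules, i.e.
`h ▷ (a ▷_A v) = (h₍₁₎ ▷ a) ▷_A (h₍₂₎ ▷ v)`. -/
def IsHAModule {A V : Type} [Ring A] [Algebra k A] [AddCommGroup V] [Module k V]
    (ma : ModuleAlgebra k H A) (ρA : AlgRep (k := k) A V) (ρH : AlgRep (k := k) H V) : Prop :=
  ∀ (h : H) (a : A) (v : V),
    ρH.ρ h (ρA.ρ a v) =
      TensorProduct.lift ρA.ρ (legAct ma.act ρH.ρ (Coalgebra.comul h) (a ⊗ₜ[k] v))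

/-- The Giaquinto–Zhang twisted action `▷_F = ▷_A ∘ (F⁻¹ ▷ −)` of `A_F` on `V`. -/
def twistedAct {A V : Type} [Ring A] [Algebra k A] [AddCommGroup V] [Module k V]
    (ma : ModuleAlgebra k H A) (ρA : AlgRep (k := k) A V) (ρH : AlgRep (k := k) H V)
    (Finv : H ⊗[k] H) : A →ₗ[k] Module.End k V :=
  TensorProduct.curry (TensorProduct.lift ρA.ρ ∘ₗ legAct ma.act ρH.ρ Finv)

/-- Generic smash-product multiplication on `A ⊗ H`, for a multiplication `μA` on `A`,
comultiplication `δ` and multiplication `μH` on `H`, and action `actUn : H ⊗ A → A`: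
`(a # h)(b # g) = a·(h₍₁₎ ▷ b) # h₍₂₎·g`. -/
def smashMulMap {A : Type} [AddCommGroup A] [Module k A]
    (μA : A ⊗[k] A →ₗ[k] A) (δ : H →ₗ[k] H ⊗[k] H) (μH : H ⊗[k] H →ₗ[k] H)
    (actUn : H ⊗[k] A →ₗ[k] A) :
    (A ⊗[k] H) ⊗[k] (A ⊗[k] H) →ₗ[k] A ⊗[k] H :=
  TensorProduct.map μA LinearMap.id
    ∘ₗ (TensorProduct.assoc k A A H).symm.toLinearMap
    ∘ₗ (TensorProduct.map LinearMap.id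
          ((TensorProduct.map actUn μH)
            ∘ₗ (TensorProduct.tensorTensorTensorComm k H H A H).toLinearMap))
    ∘ₗ (TensorProduct.assoc k A (H ⊗[k] H) (A ⊗[k] H)).toLinearMap
    ∘ₗ TensorProduct.map (TensorProduct.map LinearMap.id δ) LinearMap.id

/-- The adjoint (strongly inner) action `h ▷ a = u(h₍₁₎)·a·u(S(h₍₂₎))` of `H` on `A`,
along an algebra homomorphism `u : H → A`. -/
def adjointAction {A : Type} [Ring A] [Algebra k A] (u : H →ₐ[k] A) :
    H →ₗ[k] Module.End k A :=
  LinearMap.mul' k (Module.End k A)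
    ∘ₗ TensorProduct.map (LinearMap.mul k A ∘ₗ u.toLinearMap)
        ((LinearMap.mul k A).flip ∘ₗ u.toLinearMap ∘ₗ HopfAlgebra.antipode (R := k))
    ∘ₗ Coalgebra.comul


section SmashHelpers

set_option synthInstance.maxHeartbeats 1000000
set_option maxHeartbeats 2000000

open Coalgebra

variable {A : Type} [Ring A] [Algebra k A]

/-- The generalized twisting map `a ⊗ h ↦ a·v(h₍₁₎) ⊗ h₍₂₎` for a linear map `v`. -/
def phiMap (v : H →ₗ[k] A) : A ⊗[k] H →ₗ[k] A ⊗[k] H :=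
  TensorProduct.map (LinearMap.mul' k A ∘ₗ TensorProduct.map LinearMap.id v) LinearMap.id
    ∘ₗ (TensorProduct.assoc k A H H).symm.toLinearMap
    ∘ₗ TensorProduct.map LinearMap.id Coalgebra.comul

lemma phiMap_tmul (v : H →ₗ[k] A) (a : A) (h : H) {ι : Type*} (r : Coalgebra.Repr k h ι) :
    phiMap v (a ⊗ₜ[k] h) = ∑ i ∈ r.index, (a * v (r.left i)) ⊗ₜ[k] r.right i := by
  have hc : (Coalgebra.comul (R := k) h) = ∑ i ∈ r.index, r.left i ⊗ₜ[k] r.right i := r.eq.symm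
  simp only [phiMap, coe_comp, Function.comp_apply, map_tmul, id_coe, _root_.id, hc, tmul_sum,
    map_sum, LinearEquiv.coe_coe, assoc_symm_tmul, mul'_apply]

lemma adjointAction_apply' (u : H →ₐ[k] A) (h : H) (b : A) {ι : Type*} (r : Coalgebra.Repr k h ι) :
    adjointAction u h b =
      ∑ i ∈ r.index, u (r.left i) * b * u (HopfAlgebra.antipode (R := k) (r.right i)) := by
  have hc : (Coalgebra.comul (R := k) h) = ∑ i ∈ r.index, r.left i ⊗ₜ[k] r.right i := r.eq.symm
  simp only [adjointAction, coe_comp, Function.comp_apply, hc, map_sum, map_tmul, mul'_apply,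
    LinearMap.sum_apply, Module.End.mul_apply, AlgHom.toLinearMap_apply, flip_apply,
    LinearMap.mul_apply', mul_assoc]

/-- product of two representations of comultiplications -/
def reprMul {x y : H} {ι κ : Type*} (r : Coalgebra.Repr k x ι) (s : Coalgebra.Repr k y κ) :
    Coalgebra.Repr k (x * y) (ι × κ) where
  index := r.index ×ˢ s.index
  left p := r.left p.1 * s.left p.2
  right p := r.right p.1 * s.right p.2
  eq := by
    rw [Bialgebra.comul_mul, ← r.eq, ← s.eq, Finset.sum_mul_sum, Finset.sum_product]
    simp [Algebra.TensorProduct.tmul_mul_tmul]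

lemma sum_counit_smul' {h : H} {ι : Type*} (r : Coalgebra.Repr k h ι) :
    ∑ i ∈ r.index, (Coalgebra.counit (R := k) (r.left i)) • r.right i = h := by
  have h2 := congrArg (TensorProduct.lid k H) (Coalgebra.sum_counit_tmul_eq (R := k) r)
  simp only [map_sum, TensorProduct.lid_tmul, one_smul] at h2
  exact h2

lemma sum_smul_counit' {h : H} {ι : Type*} (r : Coalgebra.Repr k h ι) :
    ∑ i ∈ r.index, (Coalgebra.counit (R := k) (r.right i)) • r.left i = h := by
  have h2 := congrArg (TensorProduct.rid k H) (Coalgebra.sum_tmul_counit_eq (R := k) r)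
  simp only [map_sum, TensorProduct.rid_tmul, one_smul] at h2
  exact h2

lemma key2 (u : H →ₐ[k] A) (b : A) (x : H) {ι : Type*} (ρ : Coalgebra.Repr k x ι)
    (ρ₁ : (j : ρ.ι) → Coalgebra.Repr k (ρ.left j) (H × H)) :
    ∑ j ∈ ρ.index, adjointAction u (ρ.left j) b * u (ρ.right j) = u x * b := by
  classical
  set S : H →ₗ[k] H := HopfAlgebra.antipode (R := k) with hS
  let ρ₂ : (j : ρ.ι) → Coalgebra.Repr k (ρ.right j) (H × H) := fun j => ℛ k (ρ.right j)
  let χ : H ⊗[k] (H ⊗[k] H) →ₗ[k] A :=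
    LinearMap.mul' k A ∘ₗ TensorProduct.map
      ((LinearMap.mulRight k b) ∘ₗ u.toLinearMap)
      (LinearMap.mul' k A ∘ₗ TensorProduct.map (u.toLinearMap ∘ₗ S) u.toLinearMap)
  have I := Coalgebra.sum_tmul_tmul_eq (R := k) ρ ρ₁ ρ₂
  have hχ := congrArg χ I
  simp only [map_sum, χ, coe_comp, Function.comp_apply, map_tmul, mul'_apply,
    AlgHom.toLinearMap_apply, mulRight_apply] at hχ
  calc ∑ j ∈ ρ.index, adjointAction u (ρ.left j) b * u (ρ.right j)
      = ∑ j ∈ ρ.index, ∑ l ∈ (ρ₁ j).index,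
          u ((ρ₁ j).left l) * b * (u (S ((ρ₁ j).right l)) * u (ρ.right j)) := by
        refine Finset.sum_congr rfl fun j _ => ?_
        rw [adjointAction_apply' u _ b (ρ₁ j), Finset.sum_mul]
        simp [mul_assoc, hS]
    _ = ∑ j ∈ ρ.index, ∑ l ∈ (ρ₂ j).index,
          u (ρ.left j) * b * (u (S ((ρ₂ j).left l)) * u ((ρ₂ j).right l)) := by
        simpa [mul_assoc] using hχ
    _ = u x * b := by
        have : ∀ j ∈ ρ.index, ∑ l ∈ (ρ₂ j).index,
            u (ρ.left j) * b * (u (S ((ρ₂ j).left l)) * u ((ρ₂ j).right l)) =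
            (Coalgebra.counit (R := k) (ρ.right j)) • (u (ρ.left j) * b) := by
          intro j _
          have ha : ∑ l ∈ (ρ₂ j).index, u (S ((ρ₂ j).left l)) * u ((ρ₂ j).right l) =
              (Coalgebra.counit (R := k) (ρ.right j)) • (1 : A) := by
            rw [← Algebra.algebraMap_eq_smul_one, ← AlgHom.commutes u,
              ← HopfAlgebra.sum_antipode_mul_eq_algebraMap_counit (R := k) (ρ₂ j), map_sum]
            simp [hS]
          rw [← Finset.mul_sum, ha]
          simp [Algebra.mul_smul_comm]
        rw [Finset.sum_congr rfl this]
        have hx : ∑ j ∈ ρ.index, (Coalgebra.counit (R := k) (ρ.right j)) • u (ρ.left j) = u x := by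
          conv_rhs => rw [← sum_smul_counit' ρ]
          rw [map_sum]
          simp [map_smul]
        calc ∑ j ∈ ρ.index, (Coalgebra.counit (R := k) (ρ.right j)) • (u (ρ.left j) * b)
            = (∑ j ∈ ρ.index, (Coalgebra.counit (R := k) (ρ.right j)) • u (ρ.left j)) * b := by
              rw [Finset.sum_mul]
              simp [smul_mul_assoc]
          _ = u x * b := by rw [hx]

lemma key1 (u : H →ₐ[k] A) (b : A) {h : H} {ι : Type*} (r : Coalgebra.Repr k h ι)
    (r₂ : (i : r.ι) → Coalgebra.Repr k (r.right i) (H × H)) :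
    ∑ i ∈ r.index, ∑ j ∈ (r₂ i).index,
        (adjointAction u (r.left i) b * u ((r₂ i).left j)) ⊗ₜ[k] (r₂ i).right j =
      ∑ i ∈ r.index, (u (r.left i) * b) ⊗ₜ[k] r.right i := by
  classical
  let r₁ : (i : r.ι) → Coalgebra.Repr k (r.left i) (H × H) := fun i => ℛ k (r.left i)
  let ψ : H ⊗[k] (H ⊗[k] H) →ₗ[k] A ⊗[k] H :=
    (TensorProduct.map
        (LinearMap.mul' k A ∘ₗ TensorProduct.map ((adjointAction u).flip b) u.toLinearMap)
        LinearMap.id)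
      ∘ₗ (TensorProduct.assoc k H H H).symm.toLinearMap
  have hψ := congrArg ψ (Coalgebra.sum_tmul_tmul_eq (R := k) r r₁ r₂)
  simp only [map_sum, ψ, coe_comp, Function.comp_apply, LinearEquiv.coe_coe, assoc_symm_tmul,
    map_tmul, mul'_apply, flip_apply, id_coe, _root_.id, AlgHom.toLinearMap_apply] at hψ
  rw [← hψ]
  refine Finset.sum_congr rfl fun i _ => ?_
  rw [← TensorProduct.sum_tmul, key2 u b (r.left i) (r₁ i) (fun j => ℛ k ((r₁ i).left j))]

lemma smash_tmul (ma : ModuleAlgebra k H A) (a b : A) (h g : H) {ι : Type*} (r : Coalgebra.Repr k h ι) :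
    smashMulMap (LinearMap.mul' k A) Coalgebra.comul (LinearMap.mul' k H)
        (TensorProduct.lift ma.act) ((a ⊗ₜ[k] h) ⊗ₜ[k] (b ⊗ₜ[k] g)) =
      ∑ i ∈ r.index, (a * ma.act (r.left i) b) ⊗ₜ[k] (r.right i * g) := by
  have hc : (Coalgebra.comul (R := k) h) = ∑ i ∈ r.index, r.left i ⊗ₜ[k] r.right i := r.eq.symm
  simp only [smashMulMap, coe_comp, Function.comp_apply, map_tmul, id_coe, _root_.id, hc,
    tmul_sum, sum_tmul, map_sum, LinearEquiv.coe_coe, assoc_tmul, assoc_symm_tmul,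
    tensorTensorTensorComm_tmul, mul'_apply, lift.tmul]

lemma psi_phi (u : H →ₐ[k] A) (a : A) (h : H) :
    phiMap (u.toLinearMap ∘ₗ HopfAlgebra.antipode (R := k))
        (phiMap u.toLinearMap (a ⊗ₜ[k] h)) = a ⊗ₜ[k] h := by
  classical
  set S : H →ₗ[k] H := HopfAlgebra.antipode (R := k) with hS
  let r := ℛ k h
  let r₁ : (i : r.ι) → Coalgebra.Repr k (r.left i) (H × H) := fun i => ℛ k (r.left i)
  let r₂ : (i : r.ι) → Coalgebra.Repr k (r.right i) (H × H) := fun i => ℛ k (r.right i)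
  rw [phiMap_tmul u.toLinearMap a h r, map_sum,
    Finset.sum_congr rfl (fun i _ => phiMap_tmul _ _ _ (r₂ i))]
  let χ : H ⊗[k] (H ⊗[k] H) →ₗ[k] A ⊗[k] H :=
    (TensorProduct.map
        (LinearMap.mulLeft k a ∘ₗ LinearMap.mul' k A
          ∘ₗ TensorProduct.map u.toLinearMap (u.toLinearMap ∘ₗ S))
        LinearMap.id)
      ∘ₗ (TensorProduct.assoc k H H H).symm.toLinearMap
  have hχ := congrArg χ (Coalgebra.sum_tmul_tmul_eq (R := k) r r₁ r₂)
  simp only [map_sum, χ, coe_comp, Function.comp_apply, LinearEquiv.coe_coe, assoc_symm_tmul,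
    map_tmul, mul'_apply, mulLeft_apply, id_coe, _root_.id, AlgHom.toLinearMap_apply] at hχ
  have hstep : ∑ i ∈ r.index, ∑ j ∈ (r₂ i).index,
      (a * u (r.left i) * u (S ((r₂ i).left j))) ⊗ₜ[k] (r₂ i).right j = a ⊗ₜ[k] h := by
    rw [show (∑ i ∈ r.index, ∑ j ∈ (r₂ i).index,
        (a * u (r.left i) * u (S ((r₂ i).left j))) ⊗ₜ[k] (r₂ i).right j) =
        ∑ i ∈ r.index, ∑ j ∈ (r₂ i).index,
        (a * (u (r.left i) * u (S ((r₂ i).left j)))) ⊗ₜ[k] (r₂ i).right j from by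
      simp [mul_assoc]]
    rw [← hχ]
    have hmid : ∀ i ∈ r.index, ∑ j ∈ (r₁ i).index,
        (a * (u ((r₁ i).left j) * u (S ((r₁ i).right j)))) ⊗ₜ[k] r.right i =
        (Coalgebra.counit (R := k) (r.left i)) • (a ⊗ₜ[k] r.right i) := by
      intro i _
      rw [← TensorProduct.sum_tmul]
      have ha : ∑ j ∈ (r₁ i).index,
          a * (u ((r₁ i).left j) * u (S ((r₁ i).right j))) =
          (Coalgebra.counit (R := k) (r.left i)) • a := by
        rw [← Finset.mul_sum]
        have hb : ∑ j ∈ (r₁ i).index, u ((r₁ i).left j) * u (S ((r₁ i).right j)) =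
            (Coalgebra.counit (R := k) (r.left i)) • (1 : A) := by
          rw [← Algebra.algebraMap_eq_smul_one, ← AlgHom.commutes u,
            ← HopfAlgebra.sum_mul_antipode_eq_algebraMap_counit (R := k) (r₁ i), map_sum]
          simp [hS]
        rw [hb, Algebra.mul_smul_comm, mul_one]
      rw [ha, TensorProduct.smul_tmul']
    rw [Finset.sum_congr rfl hmid]
    calc ∑ i ∈ r.index, (Coalgebra.counit (R := k) (r.left i)) • (a ⊗ₜ[k] r.right i)
        = a ⊗ₜ[k] (∑ i ∈ r.index, (Coalgebra.counit (R := k) (r.left i)) • r.right i) := by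
          rw [tmul_sum]
          exact Finset.sum_congr rfl fun i _ => by rw [TensorProduct.tmul_smul]
      _ = a ⊗ₜ[k] h := by rw [sum_counit_smul' r]
  rw [← hstep]
  refine Finset.sum_congr rfl fun i _ => Finset.sum_congr rfl fun j _ => ?_
  simp

lemma phi_psi (u : H →ₐ[k] A) (a : A) (h : H) :
    phiMap u.toLinearMap
        (phiMap (u.toLinearMap ∘ₗ HopfAlgebra.antipode (R := k)) (a ⊗ₜ[k] h)) = a ⊗ₜ[k] h := by
  classical
  set S : H →ₗ[k] H := HopfAlgebra.antipode (R := k) with hS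
  let r := ℛ k h
  let r₁ : (i : r.ι) → Coalgebra.Repr k (r.left i) (H × H) := fun i => ℛ k (r.left i)
  let r₂ : (i : r.ι) → Coalgebra.Repr k (r.right i) (H × H) := fun i => ℛ k (r.right i)
  rw [phiMap_tmul (u.toLinearMap ∘ₗ S) a h r, map_sum,
    Finset.sum_congr rfl (fun i _ => phiMap_tmul _ _ _ (r₂ i))]
  let χ : H ⊗[k] (H ⊗[k] H) →ₗ[k] A ⊗[k] H :=
    (TensorProduct.map
        (LinearMap.mulLeft k a ∘ₗ LinearMap.mul' k A
          ∘ₗ TensorProduct.map (u.toLinearMap ∘ₗ S) u.toLinearMap)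
        LinearMap.id)
      ∘ₗ (TensorProduct.assoc k H H H).symm.toLinearMap
  have hχ := congrArg χ (Coalgebra.sum_tmul_tmul_eq (R := k) r r₁ r₂)
  simp only [map_sum, χ, coe_comp, Function.comp_apply, LinearEquiv.coe_coe, assoc_symm_tmul,
    map_tmul, mul'_apply, mulLeft_apply, id_coe, _root_.id, AlgHom.toLinearMap_apply] at hχ
  have hstep : ∑ i ∈ r.index, ∑ j ∈ (r₂ i).index,
      (a * u (S (r.left i)) * u ((r₂ i).left j)) ⊗ₜ[k] (r₂ i).right j = a ⊗ₜ[k] h := by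
    rw [show (∑ i ∈ r.index, ∑ j ∈ (r₂ i).index,
        (a * u (S (r.left i)) * u ((r₂ i).left j)) ⊗ₜ[k] (r₂ i).right j) =
        ∑ i ∈ r.index, ∑ j ∈ (r₂ i).index,
        (a * (u (S (r.left i)) * u ((r₂ i).left j))) ⊗ₜ[k] (r₂ i).right j from by
      simp [mul_assoc]]
    rw [← hχ]
    have hmid : ∀ i ∈ r.index, ∑ j ∈ (r₁ i).index,
        (a * (u (S ((r₁ i).left j)) * u ((r₁ i).right j))) ⊗ₜ[k] r.right i =
        (Coalgebra.counit (R := k) (r.left i)) • (a ⊗ₜ[k] r.right i) := by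
      intro i _
      rw [← TensorProduct.sum_tmul]
      have ha : ∑ j ∈ (r₁ i).index,
          a * (u (S ((r₁ i).left j)) * u ((r₁ i).right j)) =
          (Coalgebra.counit (R := k) (r.left i)) • a := by
        rw [← Finset.mul_sum]
        have hb : ∑ j ∈ (r₁ i).index, u (S ((r₁ i).left j)) * u ((r₁ i).right j) =
            (Coalgebra.counit (R := k) (r.left i)) • (1 : A) := by
          rw [← Algebra.algebraMap_eq_smul_one, ← AlgHom.commutes u,
            ← HopfAlgebra.sum_antipode_mul_eq_algebraMap_counit (R := k) (r₁ i), map_sum]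
          simp [hS]
        rw [hb, Algebra.mul_smul_comm, mul_one]
      rw [ha, TensorProduct.smul_tmul']
    rw [Finset.sum_congr rfl hmid]
    calc ∑ i ∈ r.index, (Coalgebra.counit (R := k) (r.left i)) • (a ⊗ₜ[k] r.right i)
        = a ⊗ₜ[k] (∑ i ∈ r.index, (Coalgebra.counit (R := k) (r.left i)) • r.right i) := by
          rw [tmul_sum]
          exact Finset.sum_congr rfl fun i _ => by rw [TensorProduct.tmul_smul]
      _ = a ⊗ₜ[k] h := by rw [sum_counit_smul' r]
  rw [← hstep]
  refine Finset.sum_congr rfl fun i _ => Finset.sum_congr rfl fun j _ => ?_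
  simp

lemma phiMap_tmul_mul (v : H →ₗ[k] A) (a : A) (x y : H)
    {ι κ : Type*} (r : Coalgebra.Repr k x ι) (s : Coalgebra.Repr k y κ) :
    phiMap v (a ⊗ₜ[k] (x * y)) =
      ∑ i ∈ r.index, ∑ j ∈ s.index,
        (a * v (r.left i * s.left j)) ⊗ₜ[k] (r.right i * s.right j) := by
  calc phiMap v (a ⊗ₜ[k] (x * y))
      = ∑ p ∈ r.index ×ˢ s.index,
          (a * v (r.left p.1 * s.left p.2)) ⊗ₜ[k] (r.right p.1 * s.right p.2) :=
        phiMap_tmul v a (x * y) (reprMul r s)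
    _ = _ := Finset.sum_product _ _ _

end SmashHelpers

open Coalgebra in
set_option synthInstance.maxHeartbeats 1000000 in
set_option maxHeartbeats 2000000 in
/-- If `H` acts adjointly on `A` via `u : H → A`, then the smash product `A # H` is
isomorphic to the (commuting-factors) tensor product algebra `A ⊗ H` via
`a # h ↦ a·u(h₍₁₎) ⊗ h₍₂₎`. -/
theorem smash_iso_tensor_of_adjoint {A : Type} [Ring A] [Algebra k A]
    (ma : ModuleAlgebra k H A) (u : H →ₐ[k] A) (hadj : ma.act = adjointAction u) :
    Function.Bijective
      (TensorProduct.map (LinearMap.mul' k A ∘ₗ TensorProduct.map LinearMap.id u.toLinearMap)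
          LinearMap.id
        ∘ₗ (TensorProduct.assoc k A H H).symm.toLinearMap
        ∘ₗ TensorProduct.map LinearMap.id Coalgebra.comul :
        A ⊗[k] H →ₗ[k] A ⊗[k] H) ∧
    (∀ x y : A ⊗[k] H,
      (TensorProduct.map (LinearMap.mul' k A ∘ₗ TensorProduct.map LinearMap.id u.toLinearMap)
          LinearMap.id
        ∘ₗ (TensorProduct.assoc k A H H).symm.toLinearMap
        ∘ₗ TensorProduct.map LinearMap.id Coalgebra.comul)
          (smashMulMap (LinearMap.mul' k A) Coalgebra.comul (LinearMap.mul' k H)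
            (TensorProduct.lift ma.act) (x ⊗ₜ[k] y)) =
      (TensorProduct.map (LinearMap.mul' k A ∘ₗ TensorProduct.map LinearMap.id u.toLinearMap)
          LinearMap.id
        ∘ₗ (TensorProduct.assoc k A H H).symm.toLinearMap
        ∘ₗ TensorProduct.map LinearMap.id Coalgebra.comul) x *
      (TensorProduct.map (LinearMap.mul' k A ∘ₗ TensorProduct.map LinearMap.id u.toLinearMap)
          LinearMap.id
        ∘ₗ (TensorProduct.assoc k A H H).symm.toLinearMap
        ∘ₗ TensorProduct.map LinearMap.id Coalgebra.comul) y) ∧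
    (TensorProduct.map (LinearMap.mul' k A ∘ₗ TensorProduct.map LinearMap.id u.toLinearMap)
          LinearMap.id
        ∘ₗ (TensorProduct.assoc k A H H).symm.toLinearMap
        ∘ₗ TensorProduct.map LinearMap.id Coalgebra.comul)
      ((1 : A) ⊗ₜ[k] (1 : H)) = (1 : A) ⊗ₜ[k] (1 : H) := by
  have hrw : (TensorProduct.map (LinearMap.mul' k A ∘ₗ TensorProduct.map LinearMap.id u.toLinearMap)
          LinearMap.id
        ∘ₗ (TensorProduct.assoc k A H H).symm.toLinearMap
        ∘ₗ TensorProduct.map LinearMap.id Coalgebra.comul :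
        A ⊗[k] H →ₗ[k] A ⊗[k] H) = phiMap u.toLinearMap := rfl
  rw [hrw]
  classical
  refine ⟨?_, ?_, ?_⟩
  · -- bijectivity
    set Ψ := phiMap (u.toLinearMap ∘ₗ HopfAlgebra.antipode (R := k)) with hΨ
    have e1 : phiMap u.toLinearMap ∘ₗ Ψ = LinearMap.id :=
      TensorProduct.ext' (fun a h => phi_psi u a h)
    have e2 : Ψ ∘ₗ phiMap u.toLinearMap = LinearMap.id :=
      TensorProduct.ext' (fun a h => psi_phi u a h)
    exact Function.bijective_iff_has_inverse.mpr
      ⟨Ψ, fun z => LinearMap.congr_fun e2 z, fun z => LinearMap.congr_fun e1 z⟩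
  · -- multiplicativity
    intro x y
    induction x using TensorProduct.induction_on with
    | zero => simp
    | add x₁ x₂ ih₁ ih₂ =>
        rw [add_tmul, map_add, map_add, map_add, ih₁, ih₂, add_mul]
    | tmul a h =>
      induction y using TensorProduct.induction_on with
      | zero => simp
      | add y₁ y₂ ih₁ ih₂ =>
          rw [tmul_add, map_add, map_add, map_add, ih₁, ih₂, mul_add]
      | tmul b g =>
        let r := ℛ k h
        let sg := ℛ k g
        let r₂ : (i : r.ι) → Coalgebra.Repr k (r.right i) (H × H) := fun i => ℛ k (r.right i)
        rw [smash_tmul ma a b h g r, map_sum,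
          Finset.sum_congr rfl
            (fun i _ => phiMap_tmul_mul u.toLinearMap _ (r.right i) g (r₂ i) sg),
          phiMap_tmul u.toLinearMap a h r, phiMap_tmul u.toLinearMap b g sg,
          Finset.sum_mul_sum]
        have hK := key1 u b r r₂
        let T : A ⊗[k] H →ₗ[k] A ⊗[k] H :=
          ∑ l ∈ sg.index,
            TensorProduct.map
              (LinearMap.mulLeft k a ∘ₗ LinearMap.mulRight k (u (sg.left l)))
              (LinearMap.mulRight k (sg.right l))
        have hT := congrArg T hK
        simp only [map_sum, T, LinearMap.sum_apply, map_tmul, coe_comp, Function.comp_apply,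
          mulLeft_apply, mulRight_apply] at hT
        calc ∑ i ∈ r.index, ∑ j ∈ (r₂ i).index, ∑ l ∈ sg.index,
              (a * ma.act (r.left i) b * u ((r₂ i).left j * sg.left l)) ⊗ₜ[k]
                ((r₂ i).right j * sg.right l)
            = ∑ i ∈ r.index, ∑ j ∈ (r₂ i).index, ∑ l ∈ sg.index,
              (a * (adjointAction u (r.left i) b * u ((r₂ i).left j) * u (sg.left l))) ⊗ₜ[k]
                ((r₂ i).right j * sg.right l) := by
              refine Finset.sum_congr rfl fun i _ => Finset.sum_congr rfl fun j _ =>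
                Finset.sum_congr rfl fun l _ => ?_
              simp only [hadj, map_mul, mul_assoc]
          _ = ∑ i ∈ r.index, ∑ l ∈ sg.index,
              (a * (u (r.left i) * b * u (sg.left l))) ⊗ₜ[k] (r.right i * sg.right l) := hT
          _ = ∑ i ∈ r.index, ∑ l ∈ sg.index,
              (a * u (r.left i) * (b * u (sg.left l))) ⊗ₜ[k] (r.right i * sg.right l) := by
              refine Finset.sum_congr rfl fun i _ => Finset.sum_congr rfl fun l _ => ?_
              simp only [mul_assoc]
          _ = ∑ i ∈ r.index, ∑ l ∈ sg.index,
              ((a * u (r.left i)) ⊗ₜ[k] r.right i) * ((b * u (sg.left l)) ⊗ₜ[k] sg.right l) := by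
              refine Finset.sum_congr rfl fun i _ => Finset.sum_congr rfl fun l _ => ?_
              rw [Algebra.TensorProduct.tmul_mul_tmul]
  · -- unitality
    simp [phiMap, Algebra.TensorProduct.one_def]


end
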